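/- Define U_{α₁⋯α_m} := (ℏ∇_{α_m}) ⋯ (ℏ∇_{α₁}) 1, where ℏ∇_α(w) = ℏ ∂_α w + (∂_α Γ)·w acts on ℬ⁰[[t]][[ℏ]]. Then for every multi-index α = (α₁,…,α_m), U_α = Σ_{i=0}^{m−1} (ⁱU_α) ℏⁱ, where ⁱU_α = Σ (1/(m−i)!) Γ_{α̲₁} ⋯ Γ_{α̲_{m−i}}, the sum running over all ordered decompositions of the index multiset α into m−i disjoint nonempty blocks α̲₁ ⊔ ⋯ ⊔ α̲_{m−i} = α, and Γ_{β₁⋯β_ℓ} := ∂_{β_ℓ} ⋯ ∂_{β₁} Γ. -/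

import Mathlib

open Finset Function

set_option linter.unusedSectionVars false
set_option maxHeartbeats 1000000

variable {I : Type} [DecidableEq I] {R : Type} [CommRing R] [Algebra ℚ R]

/-- `∂/∂t^α` on `ℬ⁰[[t]]`. -/
noncomputable def tderiv (α : I) (f : MvPowerSeries I R) : MvPowerSeries I R :=
  fun e => (e α + 1) • f (e + Finsupp.single α 1)

/-- `∂/∂t^α` on `ℬ⁰[[t]][[ℏ]]`, coefficientwise in `ℏ`. -/
noncomputable def tderivH (α : I) (F : PowerSeries (MvPowerSeries I R)) :
    PowerSeries (MvPowerSeries I R) :=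
  PowerSeries.mk fun k => tderiv α (PowerSeries.coeff k F)

/-- `ℏ∇_α(w) = ℏ ∂_α w + (∂_αΓ)·w`. -/
noncomputable def hnabla (Γ : MvPowerSeries I R) (α : I)
    (w : PowerSeries (MvPowerSeries I R)) : PowerSeries (MvPowerSeries I R) :=
  PowerSeries.X * tderivH α w + PowerSeries.C (tderiv α Γ) * w

/-- `U_{α₁⋯α_m} = (ℏ∇_{α_m}) ⋯ (ℏ∇_{α₁}) 1`, for the multi-index given as a list. -/
noncomputable def Ufn (Γ : MvPowerSeries I R) (l : List I) :
    PowerSeries (MvPowerSeries I R) :=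
  l.foldl (fun w a => hnabla Γ a w) 1

/-- `Γ_{β₁⋯β_ℓ} = ∂_{β_ℓ} ⋯ ∂_{β₁} Γ` for a block of positions `b ⊆ {1,…,m}` of the
multi-index `α`, the block being enumerated in increasing order of positions. -/
noncomputable def Gblock (Γ : MvPowerSeries I R) {m : ℕ} (α : Fin m → I)
    (b : Finset (Fin m)) : MvPowerSeries I R :=
  ((b.sort (· ≤ ·)).map α).foldl (fun f β => tderiv β f) Γ

/-- `ⁱU_α = Σ (1/(m−i)!) Γ_{α̲₁} ⋯ Γ_{α̲_{m−i}}`, the sum running over ordered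
decompositions of the index set of `α` into `m−i` disjoint nonempty blocks (equivalently,
over surjections `g : Fin m → Fin (m−i)`, with the `1/(m−i)!` normalization). -/
noncomputable def iU (Γ : MvPowerSeries I R) {m : ℕ} (α : Fin m → I) (i : ℕ) :
    MvPowerSeries I R :=
  (((m - i).factorial : ℚ)⁻¹) •
    ∑ g : Fin m → Fin (m - i),
      if Surjective g then ∏ j : Fin (m - i), Gblock Γ α (univ.filter fun p => g p = j)
      else 0

lemma tderiv_add (α : I) (f g : MvPowerSeries I R) :
    tderiv α (f + g) = tderiv α f + tderiv α g := by
  funext e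
  show (e α + 1) • ((f + g) (e + Finsupp.single α 1)) = _
  show _ = (e α + 1) • (f (e + Finsupp.single α 1)) + (e α + 1) • (g (e + Finsupp.single α 1))
  rw [show (f + g) (e + Finsupp.single α 1) = f (e + Finsupp.single α 1) + g (e + Finsupp.single α 1) from rfl, smul_add]

lemma tderiv_zero (α : I) : tderiv α (0 : MvPowerSeries I R) = 0 := by
  funext e; show (e α + 1) • (0 : R) = 0; simp

lemma tderiv_one (α : I) : tderiv α (1 : MvPowerSeries I R) = 0 := by
  funext e
  show (e α + 1) • ((1 : MvPowerSeries I R) (e + Finsupp.single α 1)) = 0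
  rw [show ((1 : MvPowerSeries I R) (e + Finsupp.single α 1)) = MvPowerSeries.coeff (R := R) _ 1 from rfl]
  rw [MvPowerSeries.coeff_one]
  rw [if_neg, smul_zero]
  intro h
  have := DFunLike.congr_fun h α
  simp at this

lemma tderiv_qsmul (α : I) (q : ℚ) (f : MvPowerSeries I R) :
    tderiv α (q • f) = q • tderiv α f := by
  funext e
  show (e α + 1) • (q • f (e + Finsupp.single α 1)) = q • ((e α + 1) • f (e + Finsupp.single α 1))
  rw [smul_comm]

lemma tderiv_sum (α : I) {ι : Type*} (s : Finset ι) (f : ι → MvPowerSeries I R) :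
    tderiv α (∑ j ∈ s, f j) = ∑ j ∈ s, tderiv α (f j) := by
  classical
  induction s using Finset.induction with
  | empty => simp [tderiv_zero]
  | insert _ _ h ih => rw [Finset.sum_insert h, tderiv_add, ih, Finset.sum_insert h]

lemma tderiv_mul (α : I) (f g : MvPowerSeries I R) :
    tderiv α (f * g) = tderiv α f * g + f * tderiv α g := by
  funext e
  have hfg : ∀ (u v : MvPowerSeries I R) (E : I →₀ ℕ),
      (u * v) E = ∑ p ∈ Finset.HasAntidiagonal.antidiagonal E, u p.1 * v p.2 := by
    intro u v E
    rw [← MvPowerSeries.coeff_apply (u*v) E, MvPowerSeries.coeff_mul]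
    rfl
  show (e α + 1) • ((f * g) (e + Finsupp.single α 1)) = _
  rw [hfg f g]
  rw [show (tderiv α f * g + f * tderiv α g) e
      = (tderiv α f * g) e + (f * tderiv α g) e from rfl, hfg (tderiv α f) g, hfg f (tderiv α g)]
  rw [Finset.smul_sum]
  have key : ∀ p ∈ Finset.HasAntidiagonal.antidiagonal (e + Finsupp.single α 1),
      (e α + 1) • (f p.1 * g p.2) = (p.1 α) • (f p.1 * g p.2) + (p.2 α) • (f p.1 * g p.2) := by
    intro p hp
    rw [Finset.HasAntidiagonal.mem_antidiagonal] at hp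
    rw [← add_smul]
    congr 1
    have := DFunLike.congr_fun hp α
    simp only [Finsupp.add_apply, Finsupp.single_eq_same] at this
    omega
  rw [Finset.sum_congr rfl key, Finset.sum_add_distrib]
  congr 1
  · -- first piece: only p with p.1 α ≠ 0 contribute
    rw [← Finset.sum_filter_of_ne (p := fun p => p.1 α ≠ 0)
      (by intro p _ h h0; exact h (by rw [h0, zero_smul]))]
    rw [Finset.sum_nbij' (i := fun p => (p.1 - Finsupp.single α 1, p.2))
      (j := fun q => (q.1 + Finsupp.single α 1, q.2)) (t := Finset.HasAntidiagonal.antidiagonal e)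
      (g := fun q => ((q.1 α + 1) • f (q.1 + Finsupp.single α 1)) * g q.2)]
    · exact Finset.sum_congr rfl fun q hq => rfl
    · intro p hp
      simp only [Finset.mem_filter, Finset.HasAntidiagonal.mem_antidiagonal] at hp
      rw [Finset.HasAntidiagonal.mem_antidiagonal]
      have hle : Finsupp.single α 1 ≤ p.1 := by
        rw [Finsupp.single_le_iff]; omega
      have : p.1 - Finsupp.single α 1 + p.2 + Finsupp.single α 1 = e + Finsupp.single α 1 := by
        rw [add_right_comm, tsub_add_cancel_of_le hle, hp.1]
      exact add_right_cancel this
    · intro q hq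
      rw [Finset.HasAntidiagonal.mem_antidiagonal] at hq
      simp only [Finset.mem_filter, Finset.HasAntidiagonal.mem_antidiagonal]
      constructor
      · rw [add_right_comm, hq]
      · simp
    · intro p hp
      simp only [Finset.mem_filter, Finset.HasAntidiagonal.mem_antidiagonal] at hp
      have hle : Finsupp.single α 1 ≤ p.1 := by
        rw [Finsupp.single_le_iff]; omega
      simp [tsub_add_cancel_of_le hle]
    · intro q hq; simp
    · intro p hp
      simp only [Finset.mem_filter, Finset.HasAntidiagonal.mem_antidiagonal] at hp
      have hle : Finsupp.single α 1 ≤ p.1 := by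
        rw [Finsupp.single_le_iff]; omega
      have h1 : ((p.1 - Finsupp.single α 1) : I →₀ ℕ) α + 1 = p.1 α := by
        simp only [Finsupp.tsub_apply, Finsupp.single_eq_same]; omega
      rw [tsub_add_cancel_of_le hle, h1, smul_mul_assoc]
  · -- second piece
    rw [← Finset.sum_filter_of_ne (p := fun p => p.2 α ≠ 0)
      (by intro p _ h h0; exact h (by rw [h0, zero_smul]))]
    rw [Finset.sum_nbij' (i := fun p => (p.1, p.2 - Finsupp.single α 1))
      (j := fun q => (q.1, q.2 + Finsupp.single α 1)) (t := Finset.HasAntidiagonal.antidiagonal e)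
      (g := fun q => f q.1 * ((q.2 α + 1) • g (q.2 + Finsupp.single α 1)))]
    · exact Finset.sum_congr rfl fun q hq => rfl
    · intro p hp
      simp only [Finset.mem_filter, Finset.HasAntidiagonal.mem_antidiagonal] at hp
      rw [Finset.HasAntidiagonal.mem_antidiagonal]
      have hle : Finsupp.single α 1 ≤ p.2 := by
        rw [Finsupp.single_le_iff]; omega
      have : p.1 + (p.2 - Finsupp.single α 1) + Finsupp.single α 1 = e + Finsupp.single α 1 := by
        rw [add_assoc, tsub_add_cancel_of_le hle, hp.1]
      exact add_right_cancel this
    · intro q hq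
      rw [Finset.HasAntidiagonal.mem_antidiagonal] at hq
      simp only [Finset.mem_filter, Finset.HasAntidiagonal.mem_antidiagonal]
      constructor
      · rw [← add_assoc, hq]
      · simp
    · intro p hp
      simp only [Finset.mem_filter, Finset.HasAntidiagonal.mem_antidiagonal] at hp
      have hle : Finsupp.single α 1 ≤ p.2 := by
        rw [Finsupp.single_le_iff]; omega
      simp [tsub_add_cancel_of_le hle]
    · intro q hq; simp
    · intro p hp
      simp only [Finset.mem_filter, Finset.HasAntidiagonal.mem_antidiagonal] at hp
      have hle : Finsupp.single α 1 ≤ p.2 := by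
        rw [Finsupp.single_le_iff]; omega
      have h1 : ((p.2 - Finsupp.single α 1) : I →₀ ℕ) α + 1 = p.2 α := by
        simp only [Finsupp.tsub_apply, Finsupp.single_eq_same]; omega
      rw [tsub_add_cancel_of_le hle, h1, mul_smul_comm]

lemma tderiv_prod (a : I) {ι : Type*} [DecidableEq ι] (s : Finset ι)
    (f : ι → MvPowerSeries I R) :
    tderiv a (∏ j ∈ s, f j) =
      ∑ j ∈ s, tderiv a (f j) * ∏ j' ∈ s.erase j, f j' := by
  induction s using Finset.induction with
  | empty => simp [tderiv_one]
  | @insert x s hx ih =>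
      rw [Finset.prod_insert hx, tderiv_mul, ih, Finset.sum_insert hx,
        Finset.erase_insert hx, Finset.mul_sum]
      congr 1
      refine Finset.sum_congr rfl fun j hj => ?_
      rw [Finset.erase_insert_of_ne (by rintro rfl; exact hx hj),
        Finset.prod_insert (fun h => hx (Finset.mem_of_mem_erase h))]
      ring

lemma sort_map_castSucc {m : ℕ} (b : Finset (Fin m)) :
    ((b.map Fin.castSuccEmb).sort (· ≤ ·)) =
      (b.sort (· ≤ ·)).map Fin.castSucc := by
  refine (fun hp hs => List.Perm.eq_of_pairwise' (r := (· ≤ ·)) (Finset.pairwise_sort _ _) hs hp) ?_ ?_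
  · rw [← Multiset.coe_eq_coe]
    simp only [Finset.sort_eq, Finset.map_val, Multiset.map_coe]
    rw [← Finset.sort_eq b (· ≤ ·), Multiset.map_coe]
    rfl
  · exact List.Pairwise.map _ (fun a b h => Fin.castSucc_le_castSucc_iff.mpr h)
      (Finset.pairwise_sort _ _)

lemma Gblock_map_castSucc (Γ : MvPowerSeries I R) {m : ℕ} (α : Fin (m+1) → I)
    (b : Finset (Fin m)) :
    Gblock Γ α (b.map Fin.castSuccEmb) = Gblock Γ (α ∘ Fin.castSucc) b := by
  unfold Gblock
  rw [sort_map_castSucc, List.map_map]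

lemma sort_insert_last {m : ℕ} (s : Finset (Fin (m+1))) (hs : Fin.last m ∉ s) :
    (insert (Fin.last m) s).sort (· ≤ ·) = s.sort (· ≤ ·) ++ [Fin.last m] := by
  refine (fun hp hs => List.Perm.eq_of_pairwise' (r := (· ≤ ·)) (Finset.pairwise_sort _ _) hs hp) ?_ ?_
  · rw [← Multiset.coe_eq_coe]
    rw [Finset.sort_eq, Finset.insert_val, Multiset.ndinsert_of_notMem hs,
      ← Multiset.coe_add, Finset.sort_eq]
    rw [show (([Fin.last m] : List (Fin (m+1))) : Multiset (Fin (m+1))) = {Fin.last m} from rfl]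
    exact ((add_comm s.val {Fin.last m}).trans (Multiset.singleton_add _ _)).symm
  · rw [List.pairwise_append]
    refine ⟨Finset.pairwise_sort _ _, List.pairwise_singleton _ _, ?_⟩
    intro a _ b hb
    rw [List.mem_singleton] at hb
    subst hb
    exact Fin.le_last a

lemma Gblock_insert_last (Γ : MvPowerSeries I R) {m : ℕ} (α : Fin (m+1) → I)
    (s : Finset (Fin (m+1))) (hs : Fin.last m ∉ s) :
    Gblock Γ α (insert (Fin.last m) s) = tderiv (α (Fin.last m)) (Gblock Γ α s) := by
  unfold Gblock
  rw [sort_insert_last s hs, List.map_append, List.foldl_append]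
  rfl

lemma Gblock_singleton (Γ : MvPowerSeries I R) {m : ℕ} (α : Fin m → I) (p : Fin m) :
    Gblock Γ α {p} = tderiv (α p) Γ := by
  unfold Gblock
  rw [Finset.sort_singleton]
  rfl

noncomputable def Sfn (Γ : MvPowerSeries I R) {m : ℕ} (α : Fin m → I) (k : ℕ) :
    MvPowerSeries I R :=
  ∑ g : Fin m → Fin k,
    if Surjective g then ∏ j : Fin k, Gblock Γ α (univ.filter fun p => g p = j) else 0

lemma Sfn_zero (Γ : MvPowerSeries I R) {m : ℕ} (hm : 0 < m) (α : Fin m → I) :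
    Sfn Γ α 0 = 0 := by
  haveI : IsEmpty (Fin m → Fin 0) := ⟨fun g => (g ⟨0, hm⟩).elim0⟩
  unfold Sfn
  rw [Finset.univ_eq_empty, Finset.sum_empty]

lemma Sfn_of_lt (Γ : MvPowerSeries I R) {m : ℕ} (α : Fin m → I) {k : ℕ} (hk : m < k) :
    Sfn Γ α k = 0 := by
  unfold Sfn
  refine Finset.sum_eq_zero fun g _ => ?_
  rw [if_neg]
  intro hsurj
  have := Fintype.card_le_of_surjective g hsurj
  simp only [Fintype.card_fin] at this
  omega

lemma surjective_snoc {m k : ℕ} (h : Fin m → Fin (k+1)) (c : Fin (k+1)) :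
    Surjective (Fin.snoc h c : Fin (m+1) → Fin (k+1)) ↔
      ∀ j, j = c ∨ ∃ p, h p = j := by
  constructor
  · intro hs j
    obtain ⟨p, hp⟩ := hs j
    refine Fin.lastCases ?_ (fun q hq => ?_) p hp
    · intro hp; left; rw [← hp, Fin.snoc_last]
    · right; exact ⟨q, by rwa [Fin.snoc_castSucc] at hq⟩
  · intro hj j
    rcases hj j with rfl | ⟨p, hp⟩
    · exact ⟨Fin.last m, Fin.snoc_last _ _⟩
    · exact ⟨Fin.castSucc p, by rwa [Fin.snoc_castSucc]⟩

lemma fiber_snoc_ne {m k : ℕ} (h : Fin m → Fin (k+1)) (c j : Fin (k+1)) (hj : j ≠ c) :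
    (univ.filter fun p : Fin (m+1) => (Fin.snoc h c : Fin (m+1) → Fin (k+1)) p = j) =
      (univ.filter fun p : Fin m => h p = j).map Fin.castSuccEmb := by
  ext p
  refine Fin.lastCases ?_ (fun q => ?_) p
  · simp only [Finset.mem_filter, Finset.mem_univ, true_and, Fin.snoc_last]
    constructor
    · intro hc; exact absurd hc.symm hj
    · intro hc
      obtain ⟨q, _, hq⟩ := Finset.mem_map.mp hc
      exact absurd hq (by
        intro hq
        exact (Fin.castSucc_lt_last q).ne (by exact hq))
  · simp only [Finset.mem_filter, Finset.mem_univ, true_and, Fin.snoc_castSucc]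
    rw [show (Fin.castSucc q : Fin (m+1)) = Fin.castSuccEmb q from rfl,
      Finset.mem_map' Fin.castSuccEmb]
    simp only [Finset.mem_filter, Finset.mem_univ, true_and]

lemma fiber_snoc_eq {m k : ℕ} (h : Fin m → Fin (k+1)) (c : Fin (k+1)) :
    (univ.filter fun p : Fin (m+1) => (Fin.snoc h c : Fin (m+1) → Fin (k+1)) p = c) =
      insert (Fin.last m) ((univ.filter fun p : Fin m => h p = c).map Fin.castSuccEmb) := by
  ext p
  refine Fin.lastCases ?_ (fun q => ?_) p
  · simp only [Finset.mem_filter, Finset.mem_univ, true_and, Fin.snoc_last,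
      Finset.mem_insert]
    tauto
  · simp only [Finset.mem_filter, Finset.mem_univ, true_and, Fin.snoc_castSucc,
      Finset.mem_insert]
    have hne : Fin.castSucc q ≠ Fin.last m := (Fin.castSucc_lt_last q).ne
    rw [show (Fin.castSucc q : Fin (m+1)) = Fin.castSuccEmb q from rfl,
      Finset.mem_map' Fin.castSuccEmb]
    simp only [Finset.mem_filter, Finset.mem_univ, true_and]
    constructor
    · intro hq; right; exact hq
    · rintro (hq | hq)
      · exact absurd hq hne
      · exact hq

noncomputable def Ffn (Γ : MvPowerSeries I R) {m k : ℕ} (α : Fin m → I)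
    (g : Fin m → Fin k) : MvPowerSeries I R :=
  if Surjective g then ∏ j : Fin k, Gblock Γ α (univ.filter fun p => g p = j) else 0

lemma Sfn_eq_sum_Ffn (Γ : MvPowerSeries I R) {m : ℕ} (α : Fin m → I) (k : ℕ) :
    Sfn Γ α k = ∑ g : Fin m → Fin k, Ffn Γ α g := rfl

lemma Sfn_succ (Γ : MvPowerSeries I R) {m : ℕ} (α : Fin (m+1) → I) (k : ℕ) :
    Sfn Γ α (k+1) =
      (k+1) • (tderiv (α (Fin.last m)) Γ * Sfn Γ (α ∘ Fin.castSucc) k)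
        + tderiv (α (Fin.last m)) (Sfn Γ (α ∘ Fin.castSucc) (k+1)) := by
  classical
  set a := α (Fin.last m) with ha
  have hS : Sfn Γ α (k+1)
      = ∑ h : Fin m → Fin (k+1), ∑ c : Fin (k+1), Ffn Γ α (Fin.snoc h c) := by
    rw [Sfn_eq_sum_Ffn,
      ← Equiv.sum_comp (Fin.snocEquiv (fun _ => Fin (k+1))) (Ffn Γ α),
      Fintype.sum_prod_type, Finset.sum_comm]
    rfl
  -- Part B: c in range h
  have partB : ∀ h : Fin m → Fin (k+1),
      (∑ c : Fin (k+1), if c ∈ Set.range h then Ffn Γ α (Fin.snoc h c) else 0)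
        = tderiv a (Ffn Γ (α ∘ Fin.castSucc) h) := by
    intro h
    by_cases hh : Surjective h
    · have hsurj : ∀ c, Surjective (Fin.snoc h c : Fin (m+1) → Fin (k+1)) := by
        intro c; rw [surjective_snoc]; intro j; right; exact hh j
      rw [show Ffn Γ (α ∘ Fin.castSucc) h
          = ∏ j : Fin (k+1), Gblock Γ (α ∘ Fin.castSucc) (univ.filter fun p => h p = j)
          from if_pos hh]
      rw [tderiv_prod]
      refine Finset.sum_congr rfl fun c _ => ?_
      rw [if_pos (show c ∈ Set.range h from hh c)]
      rw [show Ffn Γ α (Fin.snoc h c)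
          = ∏ j : Fin (k+1), Gblock Γ α
              (univ.filter fun p : Fin (m+1) => (Fin.snoc h c : Fin (m+1) → Fin (k+1)) p = j)
          from if_pos (hsurj c)]
      rw [← Finset.mul_prod_erase univ _ (Finset.mem_univ c)]
      congr 1
      · rw [fiber_snoc_eq, Gblock_insert_last _ _ _ (by
          intro hmem
          obtain ⟨q, _, hq⟩ := Finset.mem_map.mp hmem
          exact (Fin.castSucc_lt_last q).ne hq), Gblock_map_castSucc]
      · refine Finset.prod_congr rfl fun j hj => ?_
        rw [fiber_snoc_ne _ _ _ (Finset.ne_of_mem_erase hj), Gblock_map_castSucc]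
    · rw [show Ffn Γ (α ∘ Fin.castSucc) h = 0 from if_neg hh, tderiv_zero]
      refine Finset.sum_eq_zero fun c _ => ?_
      by_cases hc : c ∈ Set.range h
      · rw [if_pos hc]
        refine if_neg fun hsnoc => hh fun j => ?_
        rcases (surjective_snoc h c).mp hsnoc j with rfl | hj
        · exact hc
        · exact hj
      · rw [if_neg hc]
  -- Part A: c not in range h
  have partA : ∀ c : Fin (k+1),
      (∑ h : Fin m → Fin (k+1), if c ∉ Set.range h then Ffn Γ α (Fin.snoc h c) else 0)
        = tderiv a Γ * Sfn Γ (α ∘ Fin.castSucc) k := by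
    intro c
    have hinj : Injective (fun h' : Fin m → Fin k => c.succAbove ∘ h') := fun x y hxy =>
      funext fun p => Fin.succAbove_right_injective (congrFun hxy p)
    have himage : (∑ h : Fin m → Fin (k+1), if c ∉ Set.range h then Ffn Γ α (Fin.snoc h c) else 0)
        = ∑ h ∈ univ.image (fun h' : Fin m → Fin k => c.succAbove ∘ h'),
            (if c ∉ Set.range h then Ffn Γ α (Fin.snoc h c) else 0) := by
      refine (Finset.sum_subset (Finset.subset_univ _) ?_).symm
      intro h _ hnot
      by_cases hc : c ∈ Set.range h
      · rw [if_neg (by simpa using hc)]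
      · exfalso
        apply hnot
        choose y hy using fun p => Fin.exists_succAbove_eq (show h p ≠ c from fun e => hc ⟨p, e⟩)
        exact Finset.mem_image.mpr ⟨y, Finset.mem_univ _, funext fun p => hy p⟩
    rw [himage, Finset.sum_image (fun x _ y _ e => hinj e)]
    have hterm : ∀ h' : Fin m → Fin k,
        (if c ∉ Set.range (c.succAbove ∘ h') then Ffn Γ α (Fin.snoc (c.succAbove ∘ h') c) else 0)
          = tderiv a Γ * Ffn Γ (α ∘ Fin.castSucc) h' := by
      intro h'
      have hcnot : c ∉ Set.range (c.succAbove ∘ h') := by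
        rintro ⟨p, hp⟩; exact Fin.succAbove_ne c (h' p) hp
      rw [if_pos hcnot]
      have hsurj_iff : Surjective (Fin.snoc (c.succAbove ∘ h') c : Fin (m+1) → Fin (k+1))
          ↔ Surjective h' := by
        rw [surjective_snoc]
        constructor
        · intro hj y
          rcases hj (c.succAbove y) with he | ⟨p, hp⟩
          · exact absurd he (Fin.succAbove_ne c y)
          · exact ⟨p, Fin.succAbove_right_injective hp⟩
        · intro hs j
          by_cases hjc : j = c
          · left; exact hjc
          · right
            obtain ⟨y, hy⟩ := Fin.exists_succAbove_eq hjc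
            obtain ⟨p, hp⟩ := hs y
            exact ⟨p, by rw [comp_apply, hp, hy]⟩
      by_cases hs : Surjective h'
      · rw [show Ffn Γ α (Fin.snoc (c.succAbove ∘ h') c)
            = ∏ j : Fin (k+1), Gblock Γ α (univ.filter fun p : Fin (m+1) =>
                (Fin.snoc (c.succAbove ∘ h') c : Fin (m+1) → Fin (k+1)) p = j)
            from if_pos (hsurj_iff.mpr hs)]
        rw [show Ffn Γ (α ∘ Fin.castSucc) h'
            = ∏ j : Fin k, Gblock Γ (α ∘ Fin.castSucc) (univ.filter fun p => h' p = j)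
            from if_pos hs]
        rw [Fin.prod_univ_succAbove (fun j => Gblock Γ α (univ.filter fun p : Fin (m+1) =>
          (Fin.snoc (c.succAbove ∘ h') c : Fin (m+1) → Fin (k+1)) p = j)) c]
        congr 1
        · rw [fiber_snoc_eq]
          rw [show (univ.filter fun p : Fin m => (c.succAbove ∘ h') p = c) = ∅ from
            Finset.filter_eq_empty_iff.mpr fun {p} _ => Fin.succAbove_ne c (h' p)]
          rw [Finset.map_empty]
          exact Gblock_singleton Γ α (Fin.last m)
        · refine Finset.prod_congr rfl fun y _ => ?_
          rw [fiber_snoc_ne _ _ _ (Fin.succAbove_ne c y)]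
          rw [show (univ.filter fun p : Fin m => (c.succAbove ∘ h') p = c.succAbove y)
              = univ.filter fun p => h' p = y from by
            ext p
            simp only [Finset.mem_filter, Finset.mem_univ, true_and, comp_apply]
            exact ⟨fun hh => Fin.succAbove_right_injective hh, fun hh => by rw [hh]⟩]
          exact Gblock_map_castSucc Γ α _
      · rw [show Ffn Γ α (Fin.snoc (c.succAbove ∘ h') c) = 0 from
          if_neg (fun hx => hs (hsurj_iff.mp hx))]
        rw [show Ffn Γ (α ∘ Fin.castSucc) h' = 0 from if_neg hs, mul_zero]
    rw [Finset.sum_congr rfl fun h' _ => hterm h', ← Finset.mul_sum, ← Sfn_eq_sum_Ffn]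
  -- assemble
  rw [hS]
  have split : ∀ h : Fin m → Fin (k+1),
      (∑ c : Fin (k+1), Ffn Γ α (Fin.snoc h c))
        = (∑ c : Fin (k+1), if c ∈ Set.range h then Ffn Γ α (Fin.snoc h c) else 0)
          + (∑ c : Fin (k+1), if c ∉ Set.range h then Ffn Γ α (Fin.snoc h c) else 0) := by
    intro h
    rw [← Finset.sum_add_distrib]
    refine Finset.sum_congr rfl fun c _ => ?_
    by_cases hc : c ∈ Set.range h <;> simp [hc]
  rw [Finset.sum_congr rfl fun h _ => split h, Finset.sum_add_distrib]
  rw [Finset.sum_congr rfl fun h _ => partB h, ← tderiv_sum, ← Sfn_eq_sum_Ffn]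
  rw [Finset.sum_comm, Finset.sum_congr rfl fun c _ => partA c, Finset.sum_const]
  rw [Finset.card_univ, Fintype.card_fin]
  rw [add_comm]

lemma iU_eq (Γ : MvPowerSeries I R) {m : ℕ} (α : Fin m → I) (i : ℕ) :
    iU Γ α i = (((m - i).factorial : ℚ)⁻¹) • Sfn Γ α (m - i) := rfl

lemma tderivH_sum (a : I) {ι : Type*} (s : Finset ι)
    (f : ι → PowerSeries (MvPowerSeries I R)) :
    tderivH a (∑ j ∈ s, f j) = ∑ j ∈ s, tderivH a (f j) := by
  ext k
  simp only [tderivH, PowerSeries.coeff_mk, map_sum, tderiv_sum, PowerSeries.coeff_mk]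

lemma tderivH_C_mul_X_pow (a : I) (f : MvPowerSeries I R) (i : ℕ) :
    tderivH a (PowerSeries.C f * PowerSeries.X ^ i)
      = PowerSeries.C (tderiv a f) * PowerSeries.X ^ i := by
  ext k
  simp only [tderivH, PowerSeries.coeff_mk, PowerSeries.coeff_C_mul, PowerSeries.coeff_X_pow,
    mul_ite, mul_one, mul_zero]
  rw [apply_ite (tderiv a), tderiv_zero]

lemma Sfn_base (Γ : MvPowerSeries I R) (α : Fin 0 → I) : Sfn Γ α 0 = 1 := by
  unfold Sfn
  haveI : Unique (Fin 0 → Fin 0) := ⟨⟨fun x => x.elim0⟩, fun g => funext fun x => x.elim0⟩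
  rw [Fintype.sum_unique]
  rw [if_pos (show Surjective (default : Fin 0 → Fin 0) from fun j => j.elim0)]
  exact Finset.prod_of_isEmpty _

lemma iU_base (Γ : MvPowerSeries I R) (α : Fin 0 → I) : iU Γ α 0 = 1 := by
  rw [iU_eq, Sfn_base]
  norm_num

lemma fact_arith (n : ℕ) : ((n+1).factorial : ℚ)⁻¹ * ((n:ℚ)+1) = (n.factorial : ℚ)⁻¹ := by
  rw [Nat.factorial_succ]
  push_cast
  rw [mul_inv, mul_comm ((n:ℚ)+1)⁻¹ _, mul_assoc, inv_mul_cancel₀ (by positivity), mul_one]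

theorem U_expansion_aux (Γ : MvPowerSeries I R) (m : ℕ) (α : Fin m → I) :
    Ufn Γ (List.ofFn α) =
      ∑ i ∈ range (m+1), PowerSeries.C (iU Γ α i) * PowerSeries.X ^ i := by
  induction m with
  | zero =>
      rw [show (List.ofFn α) = [] from List.ofFn_zero (f := α)]
      rw [Finset.sum_range_one, iU_base, pow_zero, mul_one, map_one]
      rfl
  | succ m IH =>
      have hUfn : Ufn Γ (List.ofFn α)
          = hnabla Γ (α (Fin.last m)) (Ufn Γ (List.ofFn (α ∘ Fin.castSucc))) := by
        rw [List.ofFn_succ', List.concat_eq_append]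
        unfold Ufn
        rw [List.foldl_append]
        rfl
      have hL : Ufn Γ (List.ofFn α)
          = (∑ i ∈ range (m+1), PowerSeries.C
                (tderiv (α (Fin.last m)) Γ * iU Γ (α ∘ Fin.castSucc) i) * PowerSeries.X ^ i)
            + ∑ i ∈ range (m+1), PowerSeries.C
                (tderiv (α (Fin.last m)) (iU Γ (α ∘ Fin.castSucc) i)) * PowerSeries.X ^ (i+1) := by
        rw [hUfn, IH (α ∘ Fin.castSucc)]
        unfold hnabla
        rw [tderivH_sum, Finset.mul_sum, Finset.mul_sum, add_comm]
        congr 1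
        · refine Finset.sum_congr rfl fun i _ => ?_
          rw [map_mul]; ring
        · refine Finset.sum_congr rfl fun i _ => ?_
          rw [tderivH_C_mul_X_pow]; ring
      have c0 : iU Γ α 0 = tderiv (α (Fin.last m)) Γ * iU Γ (α ∘ Fin.castSucc) 0 := by
        rw [iU_eq, iU_eq, Nat.sub_zero, Nat.sub_zero, Sfn_succ Γ α m,
          Sfn_of_lt Γ _ (Nat.lt_succ_self m), tderiv_zero, add_zero,
          ← Nat.cast_smul_eq_nsmul ℚ, smul_smul, mul_smul_comm]
        congr 1
        push_cast
        exact fact_arith m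
      have cS : ∀ i, i < m → iU Γ α (i+1)
          = tderiv (α (Fin.last m)) Γ * iU Γ (α ∘ Fin.castSucc) (i+1)
            + tderiv (α (Fin.last m)) (iU Γ (α ∘ Fin.castSucc) i) := by
        intro i hi
        have hk : m + 1 - (i+1) = (m - (i+1)) + 1 := by omega
        have hk2 : m - i = (m - (i+1)) + 1 := by omega
        rw [iU_eq, iU_eq, iU_eq, hk, hk2, Sfn_succ Γ α (m - (i+1))]
        rw [smul_add, ← Nat.cast_smul_eq_nsmul ℚ, smul_smul, mul_smul_comm, tderiv_qsmul]
        congr 1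
        congr 1
        push_cast
        exact fact_arith (m - (i+1))
      have cT : iU Γ α (m+1) = tderiv (α (Fin.last m)) (iU Γ (α ∘ Fin.castSucc) m) := by
        rw [iU_eq, iU_eq, Nat.sub_self, Nat.sub_self, Sfn_zero Γ (Nat.succ_pos m) α, smul_zero]
        cases m with
        | zero =>
            rw [Sfn_base]
            norm_num
            rw [tderiv_one]
        | succ n =>
            rw [Sfn_zero Γ (Nat.succ_pos n), smul_zero, tderiv_zero]
      have hmid : (∑ i ∈ range m, PowerSeries.C (iU Γ α (i+1)) * PowerSeries.X ^ (i+1))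
          = (∑ i ∈ range m, PowerSeries.C
              (tderiv (α (Fin.last m)) Γ * iU Γ (α ∘ Fin.castSucc) (i+1)) * PowerSeries.X ^ (i+1))
            + ∑ i ∈ range m, PowerSeries.C
              (tderiv (α (Fin.last m)) (iU Γ (α ∘ Fin.castSucc) i)) * PowerSeries.X ^ (i+1) := by
        rw [← Finset.sum_add_distrib]
        refine Finset.sum_congr rfl fun i hi => ?_
        rw [cS i (Finset.mem_range.mp hi), map_add, add_mul]
      rw [hL]
      rw [Finset.sum_range_succ (fun i => PowerSeries.C (iU Γ α i) * PowerSeries.X ^ i) (m+1)]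
      rw [Finset.sum_range_succ' (fun i => PowerSeries.C (iU Γ α i) * PowerSeries.X ^ i) m]
      rw [hmid, c0, cT]
      rw [Finset.sum_range_succ' (fun i => PowerSeries.C
        (tderiv (α (Fin.last m)) Γ * iU Γ (α ∘ Fin.castSucc) i) * PowerSeries.X ^ i) m]
      rw [Finset.sum_range_succ (fun i => PowerSeries.C
        (tderiv (α (Fin.last m)) (iU Γ (α ∘ Fin.castSucc) i)) * PowerSeries.X ^ (i+1)) m]
      ring

/-- Expansion of `U_{α₁⋯α_m} = (ℏ∇_{α_m})⋯(ℏ∇_{α₁})1` in powers of `ℏ`: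
`U_α = Σ_{i=0}^{m−1} ⁱU_α ℏⁱ` with `ⁱU_α` the set-partition expressions in the
derivatives of `Γ`. -/
theorem U_expansion (Γ : MvPowerSeries I R) (m : ℕ) (hm : 1 ≤ m) (α : Fin m → I) :
    Ufn Γ (List.ofFn α) =
      ∑ i ∈ range m, PowerSeries.C (iU Γ α i) * PowerSeries.X ^ i := by
  obtain ⟨m', rfl⟩ : ∃ n, m = n + 1 := ⟨m - 1, by omega⟩
  rw [U_expansion_aux, Finset.sum_range_succ]
  have h0 : iU Γ α (m'+1) = 0 := by
    rw [iU_eq, Nat.sub_self, Sfn_zero Γ (Nat.succ_pos m') α, smul_zero]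
  rw [h0, map_zero, zero_mul, add_zero]
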